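/- Suppose U_DO(t) and U_DBO(t) are two differentiable orthonormal frames (in a finite-dimensional setting, U(t)^T U(t) = I) spanning the same subspace for all t, i.e., U_DO(t) = U_DBO(t) R(t) for some matrix R(t). If both decompositions UΣY^T (DBO) and U Y^T (DO) represent the same matrix A(t) and agree at t = 0 via R(0) orthogonal and W_y(0) = Σ(0)^T R(0), and each evolves by its respective gauge-constrained evolution equation driven by the same F = dA/dt, then U_DO(t) = U_DBO(t) R(0) and Y_DO(t) = Y_DBO(t) Σ(t)^T R(0) for all t, assuming Σ(t) remains invertible. -/

import Mathlib

open Matrix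

/-- A pair `(V, Z)` is a solution of the finite-dimensional DO evolution equations with
sample weights `w` and driving field `F = dA/dt`:
`V̇ = (I − V Vᵀ) E[F Z] C_DO⁻¹` with `C_DO = E[Zᵀ Z]`, and `Ż = Fᵀ V`. -/
def IsDOSolution {n N r : ℕ} (w : Fin N → ℝ)
    (F : ℝ → Matrix (Fin n) (Fin N) ℝ)
    (V : ℝ → Matrix (Fin n) (Fin r) ℝ)
    (Z : ℝ → Matrix (Fin N) (Fin r) ℝ) : Prop :=
  ∃ (V' : ℝ → Matrix (Fin n) (Fin r) ℝ) (Z' : ℝ → Matrix (Fin N) (Fin r) ℝ),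
    (∀ t i j, HasDerivAt (fun s => V s i j) (V' t i j) t) ∧
    (∀ t i j, HasDerivAt (fun s => Z s i j) (Z' t i j) t) ∧
    (∀ t, V' t = (1 - V t * (V t)ᵀ) * (F t * Matrix.diagonal w * Z t) *
      ((Z t)ᵀ * Matrix.diagonal w * Z t)⁻¹) ∧
    (∀ t, Z' t = (F t)ᵀ * V t)

/-- Finite-dimensional equivalence of the DO and DBO decompositions: if the DBO solution
`(U, Σ, Y)` and the DO solution `(V, Z)` represent the same matrix `A(t)` with
`F = dA/dt`, agree at `t = 0` via an orthogonal matrix `R₀` (with `W_y(0) = Σ(0)ᵀ R₀`),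
each evolves by its gauge-constrained evolution equations, `Σ(t)` remains invertible,
and solutions of the DO system are unique, then `U_DO(t) = U_DBO(t) R₀` and
`Y_DO(t) = Y_DBO(t) Σ(t)ᵀ R₀` for all `t`. -/
theorem do_dbo_equivalence_propagates
    {n N r : ℕ} (w : Fin N → ℝ)
    (A F : ℝ → Matrix (Fin n) (Fin N) ℝ)
    (U U' : ℝ → Matrix (Fin n) (Fin r) ℝ)
    (S S' : ℝ → Matrix (Fin r) (Fin r) ℝ)
    (Y Y' : ℝ → Matrix (Fin N) (Fin r) ℝ)
    (V : ℝ → Matrix (Fin n) (Fin r) ℝ)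
    (Z : ℝ → Matrix (Fin N) (Fin r) ℝ)
    (R₀ : Matrix (Fin r) (Fin r) ℝ)
    -- the DBO components are differentiable
    (hUd : ∀ t i j, HasDerivAt (fun s => U s i j) (U' t i j) t)
    (hSd : ∀ t i j, HasDerivAt (fun s => S s i j) (S' t i j) t)
    (hYd : ∀ t i j, HasDerivAt (fun s => Y s i j) (Y' t i j) t)
    -- both decompositions represent the same matrix, with F = dA/dt
    (hA : ∀ t, A t = U t * S t * (Y t)ᵀ)
    (hADO : ∀ t, A t = V t * (Z t)ᵀ)
    (hAd : ∀ t i j, HasDerivAt (fun s => A s i j) (F t i j) t)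
    -- DBO orthonormality and gauge conditions
    (hUorth : ∀ t, (U t)ᵀ * U t = 1)
    (hYorth : ∀ t, (Y t)ᵀ * Matrix.diagonal w * Y t = 1)
    (hUg : ∀ t, (U t)ᵀ * U' t = 0)
    (hYg : ∀ t, (Y' t)ᵀ * Matrix.diagonal w * Y t = 0)
    -- DBO evolution equations
    (hSe : ∀ t, S' t = (U t)ᵀ * (F t * Matrix.diagonal w * Y t))
    (hUe : ∀ t, U' t = (1 - U t * (U t)ᵀ) * (F t * Matrix.diagonal w * Y t) * (S t)⁻¹)
    (hYe : ∀ t, Y' t = ((F t)ᵀ * U t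
      - Y t * ((U t)ᵀ * (F t * Matrix.diagonal w * Y t))ᵀ) * ((S t)⁻¹)ᵀ)
    -- Σ(t) remains invertible
    (hSinv : ∀ t, IsUnit (S t).det)
    -- (V, Z) is a DO solution
    (hDO : IsDOSolution w F V Z)
    -- uniqueness of solutions of the DO system
    (huniq : ∀ (V₁ V₂ : ℝ → Matrix (Fin n) (Fin r) ℝ)
      (Z₁ Z₂ : ℝ → Matrix (Fin N) (Fin r) ℝ),
      IsDOSolution w F V₁ Z₁ → IsDOSolution w F V₂ Z₂ →
      V₁ 0 = V₂ 0 → Z₁ 0 = Z₂ 0 → ∀ t, V₁ t = V₂ t ∧ Z₁ t = Z₂ t)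
    -- equivalence at t = 0
    (hR₀ : R₀ᵀ * R₀ = 1)
    (hV0 : V 0 = U 0 * R₀)
    (hZ0 : Z 0 = Y 0 * (S 0)ᵀ * R₀) :
    ∀ t, V t = U t * R₀ ∧ Z t = Y t * (S t)ᵀ * R₀ := by
  have hR₀' : R₀ * R₀ᵀ = 1 := mul_eq_one_comm.mp hR₀
  have hRinv : R₀⁻¹ = R₀ᵀ := Matrix.inv_eq_right_inv hR₀'
  have hRTinv : R₀ᵀ⁻¹ = R₀ := Matrix.inv_eq_right_inv hR₀
  have hR1 : ∀ M : Matrix (Fin r) (Fin r) ℝ, R₀ * (R₀ᵀ * M) = M := fun M => by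
    rw [← Matrix.mul_assoc, hR₀', Matrix.one_mul]
  have hR1' : ∀ M : Matrix (Fin r) (Fin n) ℝ, R₀ * (R₀ᵀ * M) = M := fun M => by
    rw [← Matrix.mul_assoc, hR₀', Matrix.one_mul]
  have hDO₂ : IsDOSolution w F (fun t => U t * R₀) (fun t => Y t * (S t)ᵀ * R₀) := by
    refine ⟨fun t => U' t * R₀, fun t => (Y' t * (S t)ᵀ + Y t * (S' t)ᵀ) * R₀,
      ?_, ?_, ?_, ?_⟩
    · intro t i j
      have key : HasDerivAt (fun s => ∑ k, U s i k * R₀ k j)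
          (∑ k, U' t i k * R₀ k j) t :=
        HasDerivAt.fun_sum fun k _ => (hUd t i k).mul_const _
      simpa [Matrix.mul_apply] using key
    · intro t i j
      have key : HasDerivAt (fun s => ∑ k, (∑ l, Y s i l * S s k l) * R₀ k j)
          (∑ k, (∑ l, (Y' t i l * S t k l + Y t i l * S' t k l)) * R₀ k j) t :=
        HasDerivAt.fun_sum fun k _ =>
          ((HasDerivAt.fun_sum fun l _ => (hYd t i l).mul (hSd t k l)).mul_const _)
      have h1 : (fun s => (Y s * (S s)ᵀ * R₀) i j)
          = fun s => ∑ k, (∑ l, Y s i l * S s k l) * R₀ k j := by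
        funext s; simp [Matrix.mul_apply, Matrix.transpose_apply]
      have h2 : ((Y' t * (S t)ᵀ + Y t * (S' t)ᵀ) * R₀) i j
          = ∑ k, (∑ l, (Y' t i l * S t k l + Y t i l * S' t k l)) * R₀ k j := by
        simp [Matrix.mul_apply, Matrix.add_apply, Matrix.transpose_apply,
          Finset.sum_add_distrib, add_mul]
      show HasDerivAt (fun s => (Y s * (S s)ᵀ * R₀) i j)
        (((Y' t * (S t)ᵀ + Y t * (S' t)ᵀ) * R₀) i j) t
      rw [h1, h2]; exact key
    · intro t
      have hST : IsUnit (S t)ᵀ.det := by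
        rw [Matrix.det_transpose]; exact hSinv t
      have hS1 : ∀ M : Matrix (Fin r) (Fin r) ℝ,
          (S t)ᵀ * (((S t)ᵀ)⁻¹ * M) = M := fun M => by
        rw [← Matrix.mul_assoc, Matrix.mul_nonsing_inv _ hST, Matrix.one_mul]
      have hYc : ∀ M : Matrix (Fin r) (Fin r) ℝ,
          (Y t)ᵀ * (Matrix.diagonal w * (Y t * M)) = M := fun M => by
        rw [← Matrix.mul_assoc, ← Matrix.mul_assoc, hYorth t, Matrix.one_mul]
      have hC : ((Y t * (S t)ᵀ * R₀)ᵀ * Matrix.diagonal w * (Y t * (S t)ᵀ * R₀))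
          = R₀ᵀ * (S t * (S t)ᵀ) * R₀ := by
        simp only [Matrix.transpose_mul, Matrix.transpose_transpose, Matrix.mul_assoc]
        rw [hYc ((S t)ᵀ * R₀)]
      have hCinv : (R₀ᵀ * (S t * (S t)ᵀ) * R₀)⁻¹
          = R₀ᵀ * (((S t)ᵀ)⁻¹ * ((S t)⁻¹ * R₀)) := by
        rw [Matrix.mul_inv_rev, Matrix.mul_inv_rev, Matrix.mul_inv_rev, hRinv, hRTinv,
          Matrix.mul_assoc]
      show U' t * R₀ = (1 - (U t * R₀) * (U t * R₀)ᵀ) *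
        (F t * Matrix.diagonal w * (Y t * (S t)ᵀ * R₀)) *
        ((Y t * (S t)ᵀ * R₀)ᵀ * Matrix.diagonal w * (Y t * (S t)ᵀ * R₀))⁻¹
      rw [hC, hCinv, hUe]
      simp only [Matrix.transpose_mul, Matrix.transpose_transpose, Matrix.mul_assoc,
        hR1, hR1', hS1]
    · intro t
      have hSS1 : ((S t)⁻¹)ᵀ * (S t)ᵀ = 1 := by
        rw [← Matrix.transpose_mul, Matrix.mul_nonsing_inv _ (hSinv t),
          Matrix.transpose_one]
      show (Y' t * (S t)ᵀ + Y t * (S' t)ᵀ) * R₀ = (F t)ᵀ * (U t * R₀)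
      rw [hYe, hSe, Matrix.mul_assoc _ ((S t)⁻¹)ᵀ (S t)ᵀ, hSS1, Matrix.mul_one,
        sub_add_cancel, Matrix.mul_assoc]
  intro t
  exact huniq V (fun t => U t * R₀) Z (fun t => Y t * (S t)ᵀ * R₀) hDO hDO₂ hV0 hZ0 t
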